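/- For every integer k ≥ 3, the cycle graph C_{2^{k−2}+1} has tree-depth k, and for every vertex v of C_{2^{k−2}+1} there exists a k-ranking in which v is the unique vertex with label 1. -/

import Mathlib

/-- A `k`-ranking of a simple graph `G`: a labeling of the vertices with values from
`{1, …, k}` such that every path joining two distinct vertices with the same label
contains a vertex with a strictly higher label. -/
def IsRanking {V : Type*} (G : SimpleGraph V) (k : ℕ) (f : V → ℕ) : Prop :=
  (∀ v, 1 ≤ f v ∧ f v ≤ k) ∧
  ∀ ⦃u v : V⦄ (p : G.Walk u v), p.IsPath → u ≠ v → f u = f v →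
    ∃ w ∈ p.support, f u < f w

/-- The tree-depth of `G`: the least `k` such that `G` admits a `k`-ranking. -/
noncomputable def treedepth {V : Type*} (G : SimpleGraph V) : ℕ :=
  sInf {k | ∃ f, IsRanking G k f}


open SimpleGraph
open scoped Fin.NatCast Fin.CommRing

lemma seq_bound : ∀ (m lo hi : ℕ) (f : ℕ → ℕ),
    (∀ i, lo ≤ i → i < hi → 1 ≤ f i ∧ f i ≤ m) →
    (∀ i j, lo ≤ i → i < j → j < hi → f i = f j → ∃ h, i < h ∧ h < j ∧ f i < f h) →
    hi < lo + 2 ^ m := by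
  intro m
  induction m with
  | zero =>
    intro lo hi f hb _
    by_contra hc
    push_neg at hc
    have := hb lo (le_refl _) (by omega)
    omega
  | succ m ih =>
    intro lo hi f hb hbetween
    by_contra hc
    push_neg at hc
    -- interval nonempty
    have hpow : 0 < 2 ^ (m+1) := pow_pos (by norm_num) _
    have hne : (Finset.Ico lo hi).Nonempty := ⟨lo, by simp; omega⟩
    obtain ⟨p, hp, hmax⟩ := Finset.exists_max_image (Finset.Ico lo hi) f hne
    rw [Finset.mem_Ico] at hp
    have hlt : ∀ x, lo ≤ x → x < hi → x ≠ p → f x < f p := by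
      intro x hx1 hx2 hx3
      have hle := hmax x (Finset.mem_Ico.mpr ⟨hx1, hx2⟩)
      rcases lt_or_eq_of_le hle with h | h
      · exact h
      · exfalso
        rcases Nat.lt_or_ge x p with hxp | hxp
        · obtain ⟨h', hh1, hh2, hh3⟩ := hbetween x p hx1 (by omega) hp.2 h
          have := hmax h' (Finset.mem_Ico.mpr ⟨by omega, by omega⟩)
          omega
        · obtain ⟨h', hh1, hh2, hh3⟩ := hbetween p x hp.1 (by omega) hx2 h.symm
          have := hmax h' (Finset.mem_Ico.mpr ⟨by omega, by omega⟩)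
          omega
    have h1 : p < lo + 2 ^ m := by
      apply ih lo p f
      · intro i h1 h2
        have := hb i h1 (by omega)
        have := hlt i h1 (by omega) (by omega)
        have := hb p hp.1 hp.2
        omega
      · intro i j h1 h2 h3 h4
        exact hbetween i j h1 h2 (by omega) h4
    have h2 : hi < (p + 1) + 2 ^ m := by
      apply ih (p+1) hi f
      · intro i hh1 hh2
        have := hb i (by omega) hh2
        have := hlt i (by omega) hh2 (by omega)
        have := hb p hp.1 hp.2
        omega
      · intro i j hh1 hh2 hh3 hh4
        exact hbetween i j (by omega) hh2 hh3 hh4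
    have : 2 ^ (m+1) = 2^m + 2^m := by ring
    omega


variable {n : ℕ} [NeZero n]

lemma val_add_cast (u : Fin n) (i : ℕ) : (u + (i : Fin n)).val = (u.val + i) % n := by
  rw [Fin.add_def]
  show (u.val + (i : Fin n).val) % n = _
  rw [Fin.val_natCast, Nat.add_mod, Nat.mod_mod_of_dvd _ dvd_rfl, ← Nat.add_mod]

lemma val_sub_cast (u : Fin n) (i : ℕ) (hi : i ≤ n) :
    (u - (i : Fin n)).val = (u.val + (n - i)) % n := by
  rw [Fin.sub_def]
  show (n - (i : Fin n).val + u.val) % n = _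
  rw [Fin.val_natCast]
  rcases eq_or_lt_of_le hi with h | h
  · subst h
    simp [Nat.mod_self, Nat.mod_eq_of_lt u.isLt]
  · rw [Nat.mod_eq_of_lt h, Nat.add_comm]

lemma cast_inj_of_lt {i j : ℕ} (hi : i < n) (hj : j < n) (h : (i : Fin n) = j) : i = j := by
  have := congrArg Fin.val h
  rwa [Fin.val_natCast, Fin.val_natCast, Nat.mod_eq_of_lt hi, Nat.mod_eq_of_lt hj] at this

lemma fin_one_val (hn : 3 ≤ n) : (1 : Fin n).val = 1 := by
  rw [Fin.val_one']; exact Nat.mod_eq_of_lt (by omega)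

lemma adj_iff (hn : 3 ≤ n) {u v : Fin n} (h : (cycleGraph n).Adj u v) :
    v = u + 1 ∨ v = u - 1 := by
  rw [cycleGraph_adj'] at h
  rcases h with h | h
  · right
    have : u - v = 1 := by apply Fin.ext; rw [fin_one_val hn]; exact h
    rw [← this]; ring
  · left
    have : v - u = 1 := by apply Fin.ext; rw [fin_one_val hn]; exact h
    rw [← this]; ring

lemma adj_succ (hn : 3 ≤ n) (u : Fin n) : (cycleGraph n).Adj u (u + 1) := by
  rw [cycleGraph_adj']
  right
  have : u + 1 - u = 1 := by ring
  rw [this, fin_one_val hn]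

lemma exists_arcWalk (hn : 3 ≤ n) (L : ℕ) : ∀ (u : Fin n),
    ∃ p : (SimpleGraph.cycleGraph n).Walk u (u + (L : Fin n)),
      p.support = List.map (fun i : ℕ => u + (i : Fin n)) (List.range (L+1)) ∧ p.length = L := by
  induction L with
  | zero =>
    intro u
    refine ⟨Walk.nil.copy rfl (by simp), ?_, ?_⟩ <;> simp [List.range_succ]
  | succ L ih =>
    intro u
    obtain ⟨q, hq1, hq2⟩ := ih (u + 1)
    refine ⟨(Walk.cons (adj_succ hn u) q).copy rfl (by push_cast; ring), ?_, ?_⟩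
    · rw [Walk.support_copy, Walk.support_cons, hq1]
      conv_rhs => rw [List.range_succ_eq_map]
      rw [List.map_cons, List.map_map]
      congr 1
      · show u = u + ((0:ℕ) : Fin n)
        simp
      · apply List.map_congr_left
        intro i _
        show u + 1 + (i : Fin n) = u + ((i+1 : ℕ) : Fin n)
        push_cast; ring
    · rw [Walk.length_copy, Walk.length_cons, hq2]

lemma exists_arcPath (hn : 3 ≤ n) (L : ℕ) (hL : L < n) (u : Fin n) :
    ∃ p : (SimpleGraph.cycleGraph n).Walk u (u + (L : Fin n)),
      p.IsPath ∧ p.length = L ∧ (∀ i ≤ L, u + (i : Fin n) ∈ p.support) ∧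
      (∀ w ∈ p.support, ∃ i ≤ L, w = u + (i : Fin n)) := by
  obtain ⟨p, hp1, hp2⟩ := exists_arcWalk hn L u
  refine ⟨p, ?_, hp2, ?_, ?_⟩
  · rw [Walk.isPath_def, hp1]
    apply List.Nodup.map_on _ List.nodup_range
    intro i hi j hj hij
    rw [List.mem_range] at hi hj
    have : (i : Fin n) = (j : Fin n) := by
      have := add_left_cancel hij
      exact this
    exact cast_inj_of_lt (by omega) (by omega) this
  · intro i hi
    rw [hp1]
    exact List.mem_map.mpr ⟨i, List.mem_range.mpr (by omega), rfl⟩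
  · intro w hw
    rw [hp1] at hw
    obtain ⟨i, hi, rfl⟩ := List.mem_map.mp hw
    exact ⟨i, by rw [List.mem_range] at hi; omega, rfl⟩

lemma path_arc (hn : 3 ≤ n) : ∀ {u v : Fin n} (p : (SimpleGraph.cycleGraph n).Walk u v),
    p.IsPath →
    (v = u + (p.length : Fin n) ∧ ∀ i ≤ p.length, u + (i : Fin n) ∈ p.support) ∨
    (v = u - (p.length : Fin n) ∧ ∀ i ≤ p.length, u - (i : Fin n) ∈ p.support) := by
  intro u v p
  induction p with
  | nil =>
    intro _
    left
    constructor
    · simp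
    · intro i hi
      simp at hi
      subst hi
      simp
  | @cons u u₂ v hadj q ih =>
    intro hp
    rw [Walk.cons_isPath_iff] at hp
    obtain ⟨hq, hu⟩ := hp
    rcases adj_iff hn hadj with h2 | h2
    · -- u₂ = u + 1
      subst h2
      rcases ih hq with ⟨hv, hsup⟩ | ⟨hv, hsup⟩
      · -- both increasing
        left
        constructor
        · conv_lhs => rw [hv]
          rw [Walk.length_cons]
          push_cast; ring
        · intro i hi
          rw [Walk.support_cons]
          match i with
          | 0 => simp
          | (j+1) =>
            right
            have : u + ((j+1 : ℕ) : Fin n) = (u + 1) + (j : Fin n) := by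
              push_cast; ring
            rw [this]
            exact hsup j (by rw [Walk.length_cons] at hi; omega)
      · -- q decreasing
        rcases Nat.eq_zero_or_pos q.length with h0 | h0
        · -- q is trivial
          left
          have hv' : v = u + 1 := by rw [hv, h0]; simp
          constructor
          · rw [Walk.length_cons, h0, hv']
            push_cast; ring
          · intro i hi
            rw [Walk.length_cons, h0] at hi
            rw [Walk.support_cons]
            match i with
            | 0 => simp
            | 1 =>
              right
              have : u + ((1:ℕ) : Fin n) = u + 1 := by push_cast; ring
              rw [this]
              exact Walk.start_mem_support q
        · exfalso
          apply hu
          convert hsup 1 h0 using 2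
          push_cast; ring
    · -- u₂ = u - 1
      subst h2
      rcases ih hq with ⟨hv, hsup⟩ | ⟨hv, hsup⟩
      · rcases Nat.eq_zero_or_pos q.length with h0 | h0
        · right
          have hv' : v = u - 1 := by rw [hv, h0]; simp
          constructor
          · rw [Walk.length_cons, h0, hv']
            push_cast; ring
          · intro i hi
            rw [Walk.length_cons, h0] at hi
            rw [Walk.support_cons]
            match i with
            | 0 => simp
            | 1 =>
              right
              have : u - ((1:ℕ) : Fin n) = u - 1 := by push_cast; ring
              rw [this]
              exact Walk.start_mem_support q
        · exfalso
          apply hu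
          convert hsup 1 h0 using 2
          push_cast; ring
      · -- both decreasing
        right
        constructor
        · conv_lhs => rw [hv]
          rw [Walk.length_cons]
          push_cast; ring
        · intro i hi
          rw [Walk.support_cons]
          match i with
          | 0 => simp
          | (j+1) =>
            right
            have : u - ((j+1 : ℕ) : Fin n) = (u - 1) - (j : Fin n) := by
              push_cast; ring
            rw [this]
            exact hsup j (by rw [Walk.length_cons] at hi; omega)

def f0 (m : ℕ) : Fin (2^m + 1) → ℕ :=
  fun i => if i.val = 0 then 1 else padicValNat 2 i.val + 2

lemma nu_le {m x : ℕ} (hx : x ≠ 0) (hxm : x ≤ 2^m) : padicValNat 2 x ≤ m := by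
  have h := pow_padicValNat_dvd (p := 2) (n := x)
  have h2 := Nat.le_of_dvd (by omega) h
  have : 2 ^ padicValNat 2 x ≤ 2 ^ m := le_trans h2 hxm
  exact (Nat.pow_le_pow_iff_right (by norm_num)).mp this

lemma nu_eq_of_pow {m : ℕ} : padicValNat 2 (2^m) = m := padicValNat.prime_pow m

lemma cong_of_nu {s x : ℕ} (hx : x ≠ 0) (hs : padicValNat 2 x = s) :
    2^(s+1) ∣ x + 2^s := by
  have h1 : 2^s ∣ x := by rw [← hs]; exact pow_padicValNat_dvd
  have h2 : ¬ 2^(s+1) ∣ x := by rw [← hs]; exact pow_succ_padicValNat_not_dvd hx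
  obtain ⟨c, rfl⟩ := h1
  rcases Nat.even_or_odd c with hc | hc
  · exfalso
    obtain ⟨t, rfl⟩ := hc
    exact h2 ⟨t, by ring⟩
  · obtain ⟨t, rfl⟩ := hc
    exact ⟨t + 1, by ring⟩

lemma nu_ge_of_dvd {s x : ℕ} (hx : x ≠ 0) (h : 2^(s+1) ∣ x) :
    s + 1 ≤ padicValNat 2 x :=
  (padicValNat_dvd_iff_le hx).mp h

lemma f0_isRanking {m : ℕ} (hm : 1 ≤ m) :
    IsRanking (SimpleGraph.cycleGraph (2^m + 1)) (m + 2) (f0 m) := by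
  have h2m : 2 ≤ 2^m := by
    calc 2 = 2^1 := by norm_num
    _ ≤ 2^m := Nat.pow_le_pow_right (by norm_num) hm
  have hn : 3 ≤ 2^m + 1 := by omega
  haveI : NeZero (2^m + 1) := ⟨by omega⟩
  constructor
  · intro v
    unfold f0
    split
    · omega
    · have hv : v.val ≤ 2^m := by have := v.isLt; omega
      have := nu_le (x := v.val) (by omega) hv
      omega
  · intro u v p hp hne hfe
    have hu0 : u.val ≠ 0 := by
      intro h
      have hfu : f0 m u = 1 := by unfold f0; simp [h]
      have hfv : f0 m v = 1 := by omega
      have : v.val = 0 := by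
        by_contra hv0
        unfold f0 at hfv
        rw [if_neg hv0] at hfv
        omega
      exact hne (Fin.ext (by omega))
    have hv0 : v.val ≠ 0 := by
      intro h
      have hfv : f0 m v = 1 := by unfold f0; simp [h]
      have hfu : f0 m u = 1 := by omega
      unfold f0 at hfu
      rw [if_neg hu0] at hfu
      omega
    obtain ⟨s, hs⟩ : ∃ s, padicValNat 2 u.val = s := ⟨_, rfl⟩
    have hsb : padicValNat 2 v.val = s := by
      unfold f0 at hfe
      rw [if_neg hu0, if_neg hv0] at hfe
      omega
    have hfu_eq : f0 m u = s + 2 := by unfold f0; rw [if_neg hu0, hs]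
    have ha_lt : u.val < 2^m + 1 := u.isLt
    have hb_lt : v.val < 2^m + 1 := v.isLt
    have hsm : s < m := by
      have hsle : s ≤ m := by rw [← hs]; exact nu_le (by omega) (by omega)
      rcases eq_or_lt_of_le hsle with h | h
      · exfalso
        have hda : (2:ℕ)^m ∣ u.val := by
          conv_lhs => rw [← h, ← hs]
          exact pow_padicValNat_dvd
        have hdb : (2:ℕ)^m ∣ v.val := by
          conv_lhs => rw [← h, ← hsb]
          exact pow_padicValNat_dvd
        have h1 : u.val = 2^m := le_antisymm (by omega) (Nat.le_of_dvd (by omega) hda)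
        have h2 : v.val = 2^m := le_antisymm (by omega) (Nat.le_of_dvd (by omega) hdb)
        exact hne (Fin.ext (by omega))
      · exact h
    have hpow_s : (0:ℕ) < 2^s := pow_pos (by norm_num) s
    have hda : 2^(s+1) ∣ u.val + 2^s := cong_of_nu (by omega) hs
    have hdb : 2^(s+1) ∣ v.val + 2^s := cong_of_nu (by omega) hsb
    have hdm : (2:ℕ)^(s+1) ∣ 2^m := pow_dvd_pow 2 (by omega)
    have hpow_s1 : (2:ℕ)^(s+1) = 2^s + 2^s := by ring
    have ha_ub : u.val + 2^s ≤ 2^m := by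
      by_contra hc
      push_neg at hc
      have h1 : 2^(s+1) ∣ (u.val + 2^s) - 2^m := Nat.dvd_sub hda hdm
      have := Nat.le_of_dvd (by omega) h1
      omega
    have hb_ub : v.val + 2^s ≤ 2^m := by
      by_contra hc
      push_neg at hc
      have h1 : 2^(s+1) ∣ (v.val + 2^s) - 2^m := Nat.dvd_sub hdb hdm
      have := Nat.le_of_dvd (by omega) h1
      omega
    have hL_lt : p.length < 2^m + 1 := by
      have := hp.length_lt
      rwa [Fintype.card_fin] at this
    have hL_pos : 1 ≤ p.length := by
      rcases Nat.eq_zero_or_pos p.length with h | h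
      · exfalso
        rcases path_arc hn p hp with ⟨hv, _⟩ | ⟨hv, _⟩ <;>
          · rw [h] at hv
            simp at hv
            exact hne hv.symm
      · exact h
    rcases path_arc hn p hp with ⟨hv, hsup⟩ | ⟨hv, hsup⟩
    · -- increasing arc
      have hL2 : 2^s ≤ p.length := by
        by_contra hc
        push_neg at hc
        have hvval : v.val = u.val + p.length := by
          conv_lhs => rw [hv]
          rw [val_add_cast]
          exact Nat.mod_eq_of_lt (by omega)
        have hdl : 2^(s+1) ∣ p.length := by
          have h3 := Nat.dvd_sub hdb hda
          rw [hvval] at h3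
          have heq : (u.val + p.length + 2^s) - (u.val + 2^s) = p.length := by omega
          rwa [heq] at h3
        have := Nat.le_of_dvd (by omega) hdl
        omega
      refine ⟨u + ((2^s : ℕ) : Fin (2^m+1)), hsup _ hL2, ?_⟩
      have hwval : (u + ((2^s : ℕ) : Fin (2^m+1))).val = u.val + 2^s := by
        rw [val_add_cast]
        exact Nat.mod_eq_of_lt (by omega)
      have hw0 : (u + ((2^s : ℕ) : Fin (2^m+1))).val ≠ 0 := by omega
      have hdw : 2^(s+1) ∣ (u + ((2^s : ℕ) : Fin (2^m+1))).val := by rw [hwval]; exact hda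
      have := nu_ge_of_dvd hw0 hdw
      unfold f0
      rw [if_neg hw0, if_neg hu0, hs]
      omega
    · -- decreasing arc
      rcases Nat.lt_or_ge (2^s) u.val with hcase | hcase
      · -- u.val > 2^s
        have hL2 : 2^s ≤ p.length := by
          by_contra hc
          push_neg at hc
          have hvval : v.val = u.val - p.length := by
            conv_lhs => rw [hv]
            rw [val_sub_cast _ _ (by omega)]
            have heq : u.val + (2^m + 1 - p.length) = (u.val - p.length) + (2^m + 1) := by omega
            rw [heq, Nat.add_mod_right]
            exact Nat.mod_eq_of_lt (by omega)
          have hdl : 2^(s+1) ∣ p.length := by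
            have h3 := Nat.dvd_sub hda hdb
            rw [hvval] at h3
            have heq : (u.val + 2^s) - ((u.val - p.length) + 2^s) = p.length := by omega
            rwa [heq] at h3
          have := Nat.le_of_dvd (by omega) hdl
          omega
        refine ⟨u - ((2^s : ℕ) : Fin (2^m+1)), hsup _ hL2, ?_⟩
        have hwval : (u - ((2^s : ℕ) : Fin (2^m+1))).val = u.val - 2^s := by
          rw [val_sub_cast _ _ (by omega)]
          have heq : u.val + (2^m + 1 - 2^s) = (u.val - 2^s) + (2^m + 1) := by omega
          rw [heq, Nat.add_mod_right]
          exact Nat.mod_eq_of_lt (by omega)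
        have hw0 : (u - ((2^s : ℕ) : Fin (2^m+1))).val ≠ 0 := by omega
        have hdw : 2^(s+1) ∣ (u - ((2^s : ℕ) : Fin (2^m+1))).val := by
          rw [hwval]
          have heq : u.val - 2^s = (u.val + 2^s) - 2^(s+1) := by omega
          rw [heq]
          exact Nat.dvd_sub hda dvd_rfl
        have := nu_ge_of_dvd hw0 hdw
        unfold f0
        rw [if_neg hw0, if_neg hu0, hs]
        omega
      · -- u.val = 2^s
        have hae : u.val = 2^s := by
          have h1 : 2^s ∣ u.val := by rw [← hs]; exact pow_padicValNat_dvd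
          have := Nat.le_of_dvd (by omega) h1
          omega
        have hL2 : 2^s + 1 ≤ p.length := by
          by_contra hc
          push_neg at hc
          rcases eq_or_lt_of_le (show p.length ≤ 2^s by omega) with h | h
          · have hvval : v.val = 0 := by
              conv_lhs => rw [hv]
              rw [val_sub_cast _ _ (by omega)]
              have heq : u.val + (2^m + 1 - p.length) = 2^m + 1 := by omega
              rw [heq, Nat.mod_self]
            exact hv0 hvval
          · have hvval : v.val = u.val - p.length := by
              conv_lhs => rw [hv]
              rw [val_sub_cast _ _ (by omega)]
              have heq : u.val + (2^m + 1 - p.length) = (u.val - p.length) + (2^m + 1) := by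
                omega
              rw [heq, Nat.add_mod_right]
              exact Nat.mod_eq_of_lt (by omega)
            have hdl : 2^(s+1) ∣ p.length := by
              have h3 := Nat.dvd_sub hda hdb
              rw [hvval] at h3
              have heq : (u.val + 2^s) - ((u.val - p.length) + 2^s) = p.length := by omega
              rwa [heq] at h3
            have := Nat.le_of_dvd (by omega) hdl
            omega
        refine ⟨u - ((2^s + 1 : ℕ) : Fin (2^m+1)), hsup _ hL2, ?_⟩
        have hwval : (u - ((2^s + 1 : ℕ) : Fin (2^m+1))).val = 2^m := by
          rw [val_sub_cast _ _ (by omega)]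
          have heq : u.val + (2^m + 1 - (2^s + 1)) = 2^m := by omega
          rw [heq]
          exact Nat.mod_eq_of_lt (by omega)
        have hw0 : (u - ((2^s + 1 : ℕ) : Fin (2^m+1))).val ≠ 0 := by
          rw [hwval]; omega
        unfold f0
        rw [if_neg hw0, if_neg hu0, hwval, nu_eq_of_pow, hs]
        omega

lemma add_cast_inj {u : Fin n} {i j : ℕ} (hi : i < n) (hj : j < n)
    (h : u + (i : Fin n) = u + (j : Fin n)) : i = j :=
  cast_inj_of_lt hi hj (add_left_cancel h)

lemma cycle_rank_bound {n K : ℕ} (hn : 3 ≤ n) (f : Fin n → ℕ)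
    (hf : IsRanking (SimpleGraph.cycleGraph n) K f) : n ≤ 2^(K-1) := by
  haveI : NeZero n := ⟨by omega⟩
  obtain ⟨w, -, hmax⟩ := Finset.exists_max_image Finset.univ f ⟨⟨0, by omega⟩, Finset.mem_univ _⟩
  have hmax' : ∀ x, f x ≤ f w := fun x => hmax x (Finset.mem_univ x)
  have huniq : ∀ x, f x = f w → x = w := by
    intro x hx
    by_contra hxw
    obtain ⟨p0⟩ := SimpleGraph.cycleGraph_preconnected (n := n) x w
    obtain ⟨y, _, hy⟩ := hf.2 p0.toPath.1 p0.toPath.2 hxw hx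
    have := hmax' y
    omega
  have hstrict : ∀ x, x ≠ w → f x < f w := by
    intro x hxw
    rcases lt_or_eq_of_le (hmax' x) with h | h
    · exact h
    · exact absurd (huniq x h) hxw
  have key : n - 1 < 0 + 2 ^ (f w - 1) := by
    apply seq_bound (f w - 1) 0 (n-1) (fun i => f (w + ((i+1 : ℕ) : Fin n)))
    · intro i _ hi
      have hne : w + ((i+1 : ℕ) : Fin n) ≠ w := by
        intro h
        have : w + ((i+1 : ℕ) : Fin n) = w + ((0 : ℕ) : Fin n) := by
          rw [h]; simp
        have := add_cast_inj (by omega) (by omega) this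
        omega
      have h1 := (hf.1 (w + ((i+1 : ℕ) : Fin n))).1
      have h2 := hstrict _ hne
      omega
    · intro i j _ hij hj hfe
      obtain ⟨p, hp, hplen, hmem, hrep⟩ :=
        exists_arcPath hn (j - i) (by omega) (w + ((i+1 : ℕ) : Fin n))
      have hend : w + ((i+1 : ℕ) : Fin n) + ((j - i : ℕ) : Fin n) = w + ((j+1 : ℕ) : Fin n) := by
        rw [add_assoc, ← Nat.cast_add]
        congr 2
        omega
      have hne : w + ((i+1 : ℕ) : Fin n) ≠ w + ((i+1 : ℕ) : Fin n) + ((j - i : ℕ) : Fin n) := by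
        intro h
        nth_rewrite 1 [show w + ((i+1:ℕ) : Fin n) + ((j-i:ℕ) : Fin n)
            = w + (((i+1) + (j-i) : ℕ) : Fin n) by push_cast; ring] at h
        nth_rewrite 1 [show w + ((i+1:ℕ) : Fin n) = w + (((i+1) + (0:ℕ) : ℕ) : Fin n) by simp] at h
        have := add_cast_inj (u := w) (by omega) (by omega) h
        omega
      have hfeq : f (w + ((i+1 : ℕ) : Fin n)) = f (w + ((i+1 : ℕ) : Fin n) + ((j-i : ℕ) : Fin n)) := by
        rw [hend]
        exact hfe
      obtain ⟨y, hy_mem, hy_lt⟩ := hf.2 p hp hne hfeq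
      obtain ⟨h, hh_le, rfl⟩ := hrep y hy_mem
      have hh0 : h ≠ 0 := by
        intro h0
        subst h0
        simp at hy_lt
      have hhL : h ≠ j - i := by
        intro hL
        subst hL
        rw [← hfeq] at hy_lt
        omega
      refine ⟨i + h, by omega, by omega, ?_⟩
      have : w + ((i+1 : ℕ) : Fin n) + (h : Fin n) = w + ((i + h + 1 : ℕ) : Fin n) := by
        rw [add_assoc, ← Nat.cast_add]
        congr 2
        omega
      rw [← this]
      exact hy_lt
  have hfw_le : f w ≤ K := (hf.1 w).2
  have : (2:ℕ) ^ (f w - 1) ≤ 2 ^ (K - 1) := Nat.pow_le_pow_right (by norm_num) (by omega)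
  omega

lemma isRanking_shift {k : ℕ} (f : Fin n → ℕ)
    (hf : IsRanking (SimpleGraph.cycleGraph n) k f) (v0 : Fin n) :
    IsRanking (SimpleGraph.cycleGraph n) k (fun i => f (i - v0)) := by
  have hhom_adj : ∀ {x y : Fin n}, (SimpleGraph.cycleGraph n).Adj x y →
      (SimpleGraph.cycleGraph n).Adj (x - v0) (y - v0) := by
    intro x y h
    rw [cycleGraph_adj'] at h ⊢
    have h1 : x - v0 - (y - v0) = x - y := by ring
    have h2 : y - v0 - (x - v0) = y - x := by ring
    rw [h1, h2]
    exact h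
  let hom : SimpleGraph.cycleGraph n →g SimpleGraph.cycleGraph n :=
    ⟨fun i => i - v0, hhom_adj⟩
  have hinj : Function.Injective (hom : Fin n → Fin n) := sub_left_injective
  constructor
  · intro v
    exact hf.1 _
  · intro u v p hp hne hfe
    have hq := Walk.map_isPath_of_injective hinj hp
    obtain ⟨y, hy_mem, hy_lt⟩ := hf.2 (p.map hom) hq (fun h => hne (hinj h)) hfe
    rw [Walk.support_map] at hy_mem
    obtain ⟨z, hz_mem, rfl⟩ := List.mem_map.mp hy_mem
    exact ⟨z, hz_mem, hy_lt⟩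

/-- For every `k ≥ 3`, the cycle `C_{2^{k-2}+1}` has tree-depth `k`, and every vertex is
the unique vertex with label 1 in some `k`-ranking. -/
theorem cycleGraph_treedepth_and_oneUnique (k : ℕ) (hk : 3 ≤ k) :
    treedepth (SimpleGraph.cycleGraph (2 ^ (k - 2) + 1)) = k ∧
    ∀ v : Fin (2 ^ (k - 2) + 1), ∃ f : Fin (2 ^ (k - 2) + 1) → ℕ,
      IsRanking (SimpleGraph.cycleGraph (2 ^ (k - 2) + 1)) k f ∧
      f v = 1 ∧ ∀ w, f w = 1 → w = v := by
  have hm : 1 ≤ k - 2 := by omega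
  have h2m : 2 ≤ 2^(k-2) := by
    calc 2 = 2^1 := by norm_num
    _ ≤ 2^(k-2) := Nat.pow_le_pow_right (by norm_num) hm
  have hn : 3 ≤ 2^(k-2)+1 := by omega
  haveI : NeZero (2^(k-2)+1) := ⟨by omega⟩
  have hkk : (k-2) + 2 = k := by omega
  have hbase : IsRanking (SimpleGraph.cycleGraph (2^(k-2)+1)) k (f0 (k-2)) := by
    have := f0_isRanking hm
    rwa [hkk] at this
  constructor
  · apply le_antisymm
    · exact Nat.sInf_le ⟨f0 (k-2), hbase⟩
    · have hne : {K | ∃ f, IsRanking (SimpleGraph.cycleGraph (2^(k-2)+1)) K f}.Nonempty :=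
        ⟨k, f0 (k-2), hbase⟩
      apply le_csInf hne
      rintro K ⟨g, hg⟩
      have hb := cycle_rank_bound hn g hg
      have h1 : (2:ℕ)^(k-2) < 2^(K-1) := by omega
      have h2 : k - 2 < K - 1 := by
        by_contra hc
        push_neg at hc
        have := Nat.pow_le_pow_right (show 1 ≤ 2 by norm_num) hc
        omega
      omega
  · intro v
    refine ⟨fun i => f0 (k-2) (i - v), isRanking_shift _ hbase v, ?_, ?_⟩
    · show f0 (k-2) (v - v) = 1
      rw [sub_self]
      unfold f0
      simp
    · intro w hw
      have h0 : (w - v).val = 0 := by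
        by_contra h
        simp only at hw
        unfold f0 at hw
        rw [if_neg h] at hw
        omega
      have h1 : w - v = 0 := Fin.ext h0
      have h2 : w - v + v = 0 + v := by rw [h1]
      simpa using h2
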